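/- A word x₁x₂⋯xₙ (n ≥ 1) over the marked alphabet belongs to L(r̄) if and only if x₁ ∈ first(r̄), x_{p+1} ∈ follow(r̄, x_p) for all 1 ≤ p < n, and xₙ ∈ last(r̄); and ε ∈ L(r̄) iff ε ∈ L(r). -/

import Mathlib

open Computability

/-- Regular expressions (with explicit parentheses) built from ∅, ε, letters,
concatenation, union, optional `?` and one-or-more `⁺`. -/
inductive PRE (α : Type) where
  | empty : PRE α
  | eps : PRE α
  | char : α → PRE α
  | paren : PRE α → PRE α
  | cat : PRE α → PRE α → PRE α
  | alt : PRE α → PRE α → PRE α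
  | opt : PRE α → PRE α
  | pos : PRE α → PRE α

/-- The language of a regular expression. -/
def PRE.lang {α : Type} : PRE α → Language α
  | .empty => 0
  | .eps => 1
  | .char a => {[a]}
  | .paren r => r.lang
  | .cat r s => r.lang * s.lang
  | .alt r s => r.lang + s.lang
  | .opt r => r.lang + 1
  | .pos r => r.lang * (r.lang)∗

/-- Replace the i-th occurrence of each letter `a` by the marked symbol `(a, i)`,
threading occurrence counters. -/
def PRE.markAux {α : Type} [DecidableEq α] : PRE α → (α → ℕ) → PRE (α × ℕ) × (α → ℕ)
  | .empty, c => (.empty, c)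
  | .eps, c => (.eps, c)
  | .char a, c => (.char (a, c a + 1), fun b => if b = a then c a + 1 else c b)
  | .paren r, c => let p := r.markAux c; (.paren p.1, p.2)
  | .cat r s, c => let p := r.markAux c; let q := s.markAux p.2; (.cat p.1 q.1, q.2)
  | .alt r s, c => let p := r.markAux c; let q := s.markAux p.2; (.alt p.1 q.1, q.2)
  | .opt r, c => let p := r.markAux c; (.opt p.1, p.2)
  | .pos r, c => let p := r.markAux c; (.pos p.1, p.2)

/-- The marked version r̄ of a regular expression. -/
def PRE.mark {α : Type} [DecidableEq α] (r : PRE α) : PRE (α × ℕ) :=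
  (r.markAux fun _ => 0).1

/-- A regular expression is deterministic (one-unambiguous) if its marked version
admits no two words w·a⁽ⁱ⁾·v and w·a⁽ʲ⁾·v′ with i ≠ j. -/
def PRE.Deterministic {α : Type} [DecidableEq α] (r : PRE α) : Prop :=
  ∀ (w v v' : List (α × ℕ)) (a : α) (i j : ℕ),
    w ++ (a, i) :: v ∈ r.mark.lang → w ++ (a, j) :: v' ∈ r.mark.lang → i = j

/-- Number of occurrences of the letter `a` in `r`. -/
def PRE.rep {α : Type} [DecidableEq α] : PRE α → α → ℕ
  | .empty, _ => 0
  | .eps, _ => 0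
  | .char b, a => if b = a then 1 else 0
  | .paren r, a => r.rep a
  | .cat r s, a => r.rep a + s.rep a
  | .alt r s, a => r.rep a + s.rep a
  | .opt r, a => r.rep a
  | .pos r, a => r.rep a

/-- `r` is a k-occurrence regular expression: every letter occurs at most `k` times. -/
def PRE.IsKORE {α : Type} [DecidableEq α] (k : ℕ) (r : PRE α) : Prop :=
  ∀ a, r.rep a ≤ k

/-- Length of the string representation (letters, ∅, ε, operators ·, +, ?, ⁺ and
parentheses each count as one character). -/
def PRE.len {α : Type} : PRE α → ℕ
  | .empty => 1
  | .eps => 1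
  | .char _ => 1
  | .paren r => r.len + 2
  | .cat r s => r.len + s.len + 1
  | .alt r s => r.len + s.len + 1
  | .opt r => r.len + 1
  | .pos r => r.len + 1

/-- Whether ε ∈ L(r). -/
def PRE.nullable {α : Type} : PRE α → Bool
  | .empty => false
  | .eps => true
  | .char _ => false
  | .paren r => r.nullable
  | .cat r s => r.nullable && s.nullable
  | .alt r s => r.nullable || s.nullable
  | .opt _ => true
  | .pos r => r.nullable

/-- pos(r): the set of symbols occurring in r. -/
def PRE.posFin {α : Type} [DecidableEq α] : PRE α → Finset α
  | .empty => ∅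
  | .eps => ∅
  | .char a => {a}
  | .paren r => r.posFin
  | .cat r s => r.posFin ∪ s.posFin
  | .alt r s => r.posFin ∪ s.posFin
  | .opt r => r.posFin
  | .pos r => r.posFin

/-- first(r): symbols that can start a word of L(r). -/
def PRE.firstFin {α : Type} [DecidableEq α] : PRE α → Finset α
  | .empty => ∅
  | .eps => ∅
  | .char a => {a}
  | .paren r => r.firstFin
  | .cat r s => if r.nullable then r.firstFin ∪ s.firstFin else r.firstFin
  | .alt r s => r.firstFin ∪ s.firstFin
  | .opt r => r.firstFin
  | .pos r => r.firstFin

/-- last(r): symbols that can end a word of L(r). -/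
def PRE.lastFin {α : Type} [DecidableEq α] : PRE α → Finset α
  | .empty => ∅
  | .eps => ∅
  | .char a => {a}
  | .paren r => r.lastFin
  | .cat r s => if s.nullable then r.lastFin ∪ s.lastFin else s.lastFin
  | .alt r s => r.lastFin ∪ s.lastFin
  | .opt r => r.lastFin
  | .pos r => r.lastFin

/-- follow(r, x): symbols that can follow the symbol x in a word of L(r). -/
def PRE.followFin {α : Type} [DecidableEq α] : PRE α → α → Finset α
  | .empty, _ => ∅
  | .eps, _ => ∅
  | .char _, _ => ∅
  | .paren r, x => r.followFin x
  | .cat r s, x =>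
      if x ∈ r.posFin then
        (if x ∈ r.lastFin then r.followFin x ∪ s.firstFin else r.followFin x)
      else s.followFin x
  | .alt r s, x => if x ∈ r.posFin then r.followFin x else s.followFin x
  | .opt r, x => r.followFin x
  | .pos r, x =>
      if x ∈ r.lastFin then r.followFin x ∪ r.firstFin else r.followFin x

set_option linter.unusedSectionVars false

namespace PRE
variable {β : Type} [DecidableEq β]

/-- The follow relation. -/
def F (g : PRE β) : β → β → Prop := fun p q => q ∈ g.followFin p

lemma first_subset_pos (r : PRE β) : r.firstFin ⊆ r.posFin := by
  induction r with
  | empty => simp [firstFin, posFin]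
  | eps => simp [firstFin, posFin]
  | char a => simp [firstFin, posFin]
  | paren r ih => exact ih
  | cat r s ihr ihs =>
      simp only [firstFin, posFin]
      split_ifs
      · exact Finset.union_subset_union ihr ihs
      · exact ihr.trans Finset.subset_union_left
  | alt r s ihr ihs => exact Finset.union_subset_union ihr ihs
  | opt r ih => exact ih
  | pos r ih => exact ih

lemma last_subset_pos (r : PRE β) : r.lastFin ⊆ r.posFin := by
  induction r with
  | empty => simp [lastFin, posFin]
  | eps => simp [lastFin, posFin]
  | char a => simp [lastFin, posFin]
  | paren r ih => exact ih
  | cat r s ihr ihs =>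
      simp only [lastFin, posFin]
      split_ifs
      · exact Finset.union_subset_union ihr ihs
      · exact ihs.trans Finset.subset_union_right
  | alt r s ihr ihs => exact Finset.union_subset_union ihr ihs
  | opt r ih => exact ih
  | pos r ih => exact ih

lemma follow_subset_pos (r : PRE β) (x : β) : r.followFin x ⊆ r.posFin := by
  induction r with
  | empty => simp [followFin, posFin]
  | eps => simp [followFin, posFin]
  | char a => simp [followFin, posFin]
  | paren r ih => exact ih
  | cat r s ihr ihs =>
      simp only [followFin, posFin]
      split_ifs
      · exact Finset.union_subset
          (ihr.trans Finset.subset_union_left)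
          ((first_subset_pos s).trans Finset.subset_union_right)
      · exact ihr.trans Finset.subset_union_left
      · exact ihs.trans Finset.subset_union_right
  | alt r s ihr ihs =>
      simp only [followFin, posFin]
      split_ifs
      · exact ihr.trans Finset.subset_union_left
      · exact ihs.trans Finset.subset_union_right
  | opt r ih => exact ih
  | pos r ih =>
      simp only [followFin]
      split_ifs
      · exact Finset.union_subset ih (first_subset_pos r)
      · exact ih

lemma one_le_rep_of_mem_pos {r : PRE β} {a : β} (h : a ∈ r.posFin) : 1 ≤ r.rep a := by
  induction r with
  | empty => simp [posFin] at h
  | eps => simp [posFin] at h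
  | char b =>
      simp only [posFin, Finset.mem_singleton] at h
      simp [rep, h]
  | paren r ih => exact ih h
  | cat r s ihr ihs =>
      simp only [posFin, Finset.mem_union] at h
      rcases h with h | h
      · exact le_trans (ihr h) (Nat.le_add_right _ _)
      · exact le_trans (ihs h) (Nat.le_add_left _ _)
  | alt r s ihr ihs =>
      simp only [posFin, Finset.mem_union] at h
      rcases h with h | h
      · exact le_trans (ihr h) (Nat.le_add_right _ _)
      · exact le_trans (ihs h) (Nat.le_add_left _ _)
  | opt r ih => exact ih h
  | pos r ih => exact ih h

lemma nil_mem_iff (r : PRE β) : ([] : List β) ∈ r.lang ↔ r.nullable = true := by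
  induction r with
  | empty => simp [lang, nullable]
  | eps => simp [lang, nullable]
  | char a =>
      simp only [lang, nullable]
      exact ⟨fun h => absurd (show ([] : List β) = [a] from h) (List.cons_ne_nil a []).symm, fun h => by simp at h⟩
  | paren r ih => exact ih
  | cat r s ihr ihs =>
      simp only [lang, nullable, Bool.and_eq_true]
      rw [Language.mem_mul]
      constructor
      · rintro ⟨a, ha, b, hb, hab⟩
        rcases List.append_eq_nil_iff.mp hab with ⟨rfl, rfl⟩
        exact ⟨ihr.mp ha, ihs.mp hb⟩
      · rintro ⟨h1, h2⟩
        exact ⟨[], ihr.mpr h1, [], ihs.mpr h2, rfl⟩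
  | alt r s ihr ihs =>
      simp only [lang, nullable, Bool.or_eq_true]
      rw [Language.mem_add, ihr, ihs]
  | opt r ih =>
      simp only [lang, nullable]
      rw [Language.mem_add]
      simp [Language.mem_one]
  | pos r ih =>
      simp only [lang, nullable]
      rw [Language.mem_mul, ← ih]
      constructor
      · rintro ⟨a, ha, b, hb, hab⟩
        rcases List.append_eq_nil_iff.mp hab with ⟨rfl, rfl⟩
        exact ha
      · intro h
        exact ⟨[], h, [], Language.nil_mem_kstar _, rfl⟩

end PRE
namespace PRE
variable {β : Type} [DecidableEq β]

lemma chain_transport {A : Finset β} {R S : β → β → Prop}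
    (H : ∀ p q, p ∈ A → R p q → S p q ∧ q ∈ A) :
    ∀ (l : List β) (x : β), x ∈ A → List.Chain' R (x :: l) →
      List.Chain' S (x :: l) ∧ ∀ a ∈ x :: l, a ∈ A
  | [], x, hx, _ => ⟨List.isChain_singleton x, by simpa using hx⟩
  | y :: l, x, hx, h => by
      simp only [List.Chain', List.isChain_cons_cons] at h
      obtain ⟨hxy, hl⟩ := h
      obtain ⟨hS, hyA⟩ := H x y hx hxy
      obtain ⟨hc, hall⟩ := chain_transport H l y hyA hl
      refine ⟨List.isChain_cons_cons.2 ⟨hS, hc⟩, ?_⟩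
      intro a ha
      rcases List.mem_cons.mp ha with rfl | ha
      · exact hx
      · exact hall a ha

lemma chain_split {A : Finset β} {R S Bd : β → β → Prop}
    (H : ∀ p q, p ∈ A → R p q → (S p q ∧ q ∈ A) ∨ Bd p q) :
    ∀ (l : List β) (x : β), x ∈ A → List.Chain' R (x :: l) →
      (List.Chain' S (x :: l) ∧ ∀ a ∈ x :: l, a ∈ A) ∨
      ∃ l₁ q l₂, l = l₁ ++ q :: l₂ ∧
        List.Chain' S (x :: l₁) ∧ (∀ a ∈ x :: l₁, a ∈ A) ∧
        Bd ((x :: l₁).getLast (List.cons_ne_nil x l₁)) q ∧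
        List.Chain' R (q :: l₂)
  | [], x, hx, _ => Or.inl ⟨List.isChain_singleton x, by simpa using hx⟩
  | y :: l, x, hx, h => by
      simp only [List.Chain', List.isChain_cons_cons] at h
      obtain ⟨hxy, hl⟩ := h
      rcases H x y hx hxy with ⟨hS, hyA⟩ | hbd
      · rcases chain_split H l y hyA hl with ⟨hc, hall⟩ | ⟨l₁, q, l₂, heq, hc, hall, hb, hr⟩
        · refine Or.inl ⟨List.isChain_cons_cons.2 ⟨hS, hc⟩, ?_⟩
          intro a ha
          rcases List.mem_cons.mp ha with rfl | ha
          · exact hx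
          · exact hall a ha
        · refine Or.inr ⟨y :: l₁, q, l₂, by rw [heq]; rfl, List.isChain_cons_cons.2 ⟨hS, hc⟩, ?_, ?_, hr⟩
          · intro a ha
            rcases List.mem_cons.mp ha with rfl | ha
            · exact hx
            · exact hall a ha
          · rwa [List.getLast_cons (List.cons_ne_nil y l₁)]
      · exact Or.inr ⟨[], y, l, rfl, List.isChain_singleton x, by simpa using hx, hbd, hl⟩

lemma getLast_append_cons (u : List β) (q : β) (v : List β) :
    (u ++ q :: v).getLast (by simp) = (q :: v).getLast (List.cons_ne_nil q v) := by
  induction u with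
  | nil => rfl
  | cons a u ih =>
      have h : (u ++ q :: v) ≠ [] := by simp
      exact (List.getLast_cons h).trans ih

/-- Head/chain/last conditions, phrased with `head?`/`getLast?`. -/
def CondL (g : PRE β) (w : List β) : Prop :=
  (∀ a ∈ w.head?, a ∈ g.firstFin) ∧ List.Chain' (fun p q => q ∈ g.followFin p) w ∧
    ∀ a ∈ w.getLast?, a ∈ g.lastFin

lemma condL_cons {g : PRE β} {x : β} {xs : List β} :
    CondL g (x :: xs) ↔
      x ∈ g.firstFin ∧ List.Chain' (fun p q => q ∈ g.followFin p) (x :: xs) ∧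
        (x :: xs).getLast (List.cons_ne_nil x xs) ∈ g.lastFin := by
  rw [CondL, List.getLast?_eq_getLast (List.cons_ne_nil x xs)]
  simp [List.head?]

end PRE
namespace PRE
variable {β : Type} [DecidableEq β]

lemma head?_append_left {u : List β} (w : List β) (h : u ≠ []) :
    (u ++ w).head? = u.head? := by
  rcases List.exists_cons_of_ne_nil h with ⟨b, t, rfl⟩; simp

lemma getLast?_append_right (u : List β) {w : List β} (h : w ≠ []) :
    (u ++ w).getLast? = w.getLast? := by
  rcases List.exists_cons_of_ne_nil h with ⟨b, t, rfl⟩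
  rw [List.getLast?_eq_getLast (l := u ++ b :: t) (by simp), List.getLast?_eq_getLast (l := b :: t) (by simp),
    getLast_append_cons u b t]

lemma condL_pos_of_condL {r : PRE β} {w : List β} (h : CondL r w) : CondL r.pos w := by
  obtain ⟨h1, h2, h3⟩ := h
  refine ⟨h1, h2.imp ?_, h3⟩
  intro a b hb
  simp only [followFin]
  split_ifs
  · exact Finset.mem_union_left _ hb
  · exact hb

lemma condL_pos_append {r : PRE β} {u v : List β} (hu : u ≠ []) (hv : v ≠ [])
    (h1 : CondL r u) (h2 : CondL r.pos v) : CondL r.pos (u ++ v) := by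
  obtain ⟨ha1, ha2, ha3⟩ := condL_pos_of_condL h1
  obtain ⟨hb1, hb2, hb3⟩ := h2
  refine ⟨?_, ?_, ?_⟩
  · rw [head?_append_left v hu]; exact ha1
  · simp only [List.Chain', List.isChain_append]
    refine ⟨ha2, hb2, ?_⟩
    intro p hp q hq
    have hpl : p ∈ r.lastFin := h1.2.2 p hp
    have hqf : q ∈ r.firstFin := hb1 q hq
    show q ∈ (r.pos).followFin p
    simp only [followFin, if_pos hpl]
    exact Finset.mem_union_right _ hqf
  · rw [getLast?_append_right u hv]; exact hb3

lemma pos_forward_aux (r : PRE β)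
    (ihr : ∀ (x : β) (xs : List β), x :: xs ∈ r.lang ↔ CondL r (x :: xs)) :
    ∀ (L : List (List β)) (u : List β), u ≠ [] → u ∈ r.lang →
      (∀ p ∈ L, p ∈ r.lang ∧ p ≠ []) → CondL r.pos (u ++ L.flatten)
  | [], u, hu, hul, _ => by
      rcases List.exists_cons_of_ne_nil hu with ⟨x, xs, rfl⟩
      simpa using condL_pos_of_condL ((ihr x xs).mp hul)
  | v :: L, u, hu, hul, hL => by
      have hv := hL v (List.mem_cons_self (a := v) (l := L))
      have ih := pos_forward_aux r ihr L v hv.2 hv.1 (fun p hp => hL p (List.mem_cons_of_mem _ hp))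
      have hcu : CondL r u := by
        rcases List.exists_cons_of_ne_nil hu with ⟨x, xs, rfl⟩
        exact (ihr x xs).mp hul
      have : u ++ (v :: L).flatten = u ++ (v ++ L.flatten) := by simp
      rw [this]
      exact condL_pos_append hu (by simp [hv.2]) hcu ih

lemma pos_backward_aux (r : PRE β)
    (ihr : ∀ (x : β) (xs : List β), x :: xs ∈ r.lang ↔ CondL r (x :: xs)) :
    ∀ (n : ℕ) (x : β) (xs : List β), xs.length ≤ n → CondL r.pos (x :: xs) →
      x :: xs ∈ r.lang * (r.lang)∗ := by
  intro n
  induction n with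
  | zero =>
      intro x xs hlen h
      have : xs = [] := List.eq_nil_of_length_eq_zero (Nat.le_zero.mp hlen)
      subst this
      rw [condL_cons] at h
      have hx : [x] ∈ r.lang := (ihr x []).mpr (condL_cons.mpr ⟨h.1, List.isChain_singleton x, h.2.2⟩)
      exact Language.mem_mul.mpr ⟨[x], hx, [], Language.nil_mem_kstar _, by simp⟩
  | succ n ih =>
      intro x xs hlen h
      rw [condL_cons] at h
      obtain ⟨hf, hc, hl⟩ := h
      have hf' : x ∈ r.firstFin := hf
      have hx : x ∈ r.posFin := first_subset_pos r hf'
      have H : ∀ p q, p ∈ r.posFin → (fun p q => q ∈ (r.pos).followFin p) p q →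
          ((fun p q => q ∈ r.followFin p) p q ∧ q ∈ r.posFin) ∨
          ((fun p q => p ∈ r.lastFin ∧ q ∈ r.firstFin) p q) := by
        intro p q hp hR
        simp only [followFin] at hR
        by_cases hpl : p ∈ r.lastFin
        · rw [if_pos hpl] at hR
          rcases Finset.mem_union.mp hR with h' | h'
          · exact Or.inl ⟨h', follow_subset_pos r p h'⟩
          · exact Or.inr ⟨hpl, h'⟩
        · rw [if_neg hpl] at hR
          exact Or.inl ⟨hR, follow_subset_pos r p hR⟩
      rcases chain_split H xs x hx hc with ⟨hcS, _⟩ | ⟨l₁, q, l₂, heq, hcS, _, hbd, hR2⟩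
      · have hw : x :: xs ∈ r.lang := (ihr x xs).mpr (condL_cons.mpr ⟨hf', hcS, hl⟩)
        exact Language.mem_mul.mpr ⟨x :: xs, hw, [], Language.nil_mem_kstar _, by simp⟩
      · subst heq
        have hpre : x :: l₁ ∈ r.lang :=
          (ihr x l₁).mpr (condL_cons.mpr ⟨hf', hcS, hbd.1⟩)
        have hlastEq : (x :: (l₁ ++ q :: l₂)).getLast (List.cons_ne_nil _ _) =
            (q :: l₂).getLast (List.cons_ne_nil q l₂) :=
          getLast_append_cons (x :: l₁) q l₂
        have hsufC : CondL r.pos (q :: l₂) := by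
          rw [condL_cons]
          exact ⟨hbd.2, hR2, by rw [← hlastEq]; exact hl⟩
        have hlen2 : l₂.length ≤ n := by
          simp only [List.length_append, List.length_cons] at hlen
          omega
        have hsuf := ih q l₂ hlen2 hsufC
        have hle : r.lang * (r.lang)∗ ≤ (r.lang)∗ := mul_kstar_le_kstar
        have hsuf' : q :: l₂ ∈ (r.lang)∗ := hle hsuf
        exact Language.mem_mul.mpr ⟨x :: l₁, hpre, q :: l₂, hsuf', rfl⟩

end PRE
namespace PRE
variable {β : Type} [DecidableEq β]

lemma main (r : PRE β) : (∀ b : β, r.rep b ≤ 1) →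
    ∀ (x : β) (xs : List β), (x :: xs ∈ r.lang ↔ CondL r (x :: xs)) := by
  induction r with
  | empty =>
      intro _ x xs
      rw [condL_cons]
      constructor
      · intro hm; exact absurd hm (by simp [lang])
      · rintro ⟨h1, -, -⟩; exact absurd h1 (by simp [firstFin])
  | eps =>
      intro _ x xs
      rw [condL_cons]
      constructor
      · intro hm; exact absurd ((Language.mem_one _).mp hm) (List.cons_ne_nil x xs)
      · rintro ⟨h1, -, -⟩; exact absurd h1 (by simp [firstFin])
  | char a =>
      intro _ x xs
      rw [condL_cons]
      constructor
      · intro hm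
        have he : x :: xs = [a] := hm
        rcases List.cons_eq_cons.mp he with ⟨rfl, rfl⟩
        exact ⟨by simp [firstFin], List.isChain_singleton x, by simp [lastFin]⟩
      · rintro ⟨h1, h2, -⟩
        have hxa : x = a := by simpa [firstFin] using h1
        subst hxa
        cases xs with
        | nil => rfl
        | cons y ys =>
            simp only [List.Chain', List.isChain_cons_cons] at h2
            exact absurd h2.1 (by simp [followFin])
  | paren r ih => exact fun h => ih h
  | opt r ih =>
      intro h x xs
      have ihr := ih h
      constructor
      · intro hm
        rcases (Language.mem_add _ _ _).mp hm with hm | hm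
        · exact (ihr x xs).mp hm
        · exact absurd ((Language.mem_one _).mp hm) (List.cons_ne_nil x xs)
      · intro hc
        exact (Language.mem_add _ _ _).mpr (Or.inl ((ihr x xs).mpr hc))
  | alt r s ihr ihs =>
      intro h x xs
      have hsum : ∀ b, r.rep b + s.rep b ≤ 1 := fun b => h b
      have hr : ∀ b, r.rep b ≤ 1 := fun b => le_trans (Nat.le_add_right _ _) (hsum b)
      have hs : ∀ b, s.rep b ≤ 1 := fun b => le_trans (Nat.le_add_left _ _) (hsum b)
      have hd : ∀ a, a ∈ r.posFin → a ∉ s.posFin := by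
        intro a ha hb
        have h1 := one_le_rep_of_mem_pos ha
        have h2 := one_le_rep_of_mem_pos hb
        have := hsum a
        omega
      constructor
      · intro hm
        rcases (Language.mem_add _ _ _).mp hm with hm | hm
        · obtain ⟨h1, h2, h3⟩ := condL_cons.mp ((ihr hr x xs).mp hm)
          rw [condL_cons]
          have hx : x ∈ r.posFin := first_subset_pos r h1
          have Ht : ∀ p q, p ∈ r.posFin → q ∈ r.followFin p →
              q ∈ (r.alt s).followFin p ∧ q ∈ r.posFin := by
            intro p q hp hq
            refine ⟨?_, follow_subset_pos r p hq⟩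
            show q ∈ (if p ∈ r.posFin then r.followFin p else s.followFin p)
            rw [if_pos hp]; exact hq
          obtain ⟨hc, -⟩ := chain_transport Ht xs x hx h2
          exact ⟨Finset.mem_union_left _ h1, hc, Finset.mem_union_left _ h3⟩
        · obtain ⟨h1, h2, h3⟩ := condL_cons.mp ((ihs hs x xs).mp hm)
          rw [condL_cons]
          have hx : x ∈ s.posFin := first_subset_pos s h1
          have Ht : ∀ p q, p ∈ s.posFin → q ∈ s.followFin p →
              q ∈ (r.alt s).followFin p ∧ q ∈ s.posFin := by
            intro p q hp hq
            refine ⟨?_, follow_subset_pos s p hq⟩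
            show q ∈ (if p ∈ r.posFin then r.followFin p else s.followFin p)
            rw [if_neg (fun hpr => hd p hpr hp)]; exact hq
          obtain ⟨hc, -⟩ := chain_transport Ht xs x hx h2
          exact ⟨Finset.mem_union_right _ h1, hc, Finset.mem_union_right _ h3⟩
      · intro hcond
        obtain ⟨h1, h2, h3⟩ := condL_cons.mp hcond
        have h1' : x ∈ r.firstFin ∪ s.firstFin := h1
        have h3' : (x :: xs).getLast (List.cons_ne_nil x xs) ∈ r.lastFin ∪ s.lastFin := h3
        rcases Finset.mem_union.mp h1' with hxf | hxf
        · have hx : x ∈ r.posFin := first_subset_pos r hxf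
          have Ht : ∀ p q, p ∈ r.posFin → q ∈ (r.alt s).followFin p →
              q ∈ r.followFin p ∧ q ∈ r.posFin := by
            intro p q hp hq
            have hq' : q ∈ (if p ∈ r.posFin then r.followFin p else s.followFin p) := hq
            rw [if_pos hp] at hq'
            exact ⟨hq', follow_subset_pos r p hq'⟩
          obtain ⟨hc, hall⟩ := chain_transport Ht xs x hx h2
          have hlr : (x :: xs).getLast (List.cons_ne_nil x xs) ∈ r.lastFin := by
            have hpos := hall _ (List.getLast_mem (List.cons_ne_nil x xs))
            rcases Finset.mem_union.mp h3' with h' | h'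
            · exact h'
            · exact absurd (last_subset_pos s h') (hd _ hpos)
          exact (Language.mem_add _ _ _).mpr
            (Or.inl ((ihr hr x xs).mpr (condL_cons.mpr ⟨hxf, hc, hlr⟩)))
        · have hx : x ∈ s.posFin := first_subset_pos s hxf
          have Ht : ∀ p q, p ∈ s.posFin → q ∈ (r.alt s).followFin p →
              q ∈ s.followFin p ∧ q ∈ s.posFin := by
            intro p q hp hq
            have hq' : q ∈ (if p ∈ r.posFin then r.followFin p else s.followFin p) := hq
            rw [if_neg (fun hpr => hd p hpr hp)] at hq'
            exact ⟨hq', follow_subset_pos s p hq'⟩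
          obtain ⟨hc, hall⟩ := chain_transport Ht xs x hx h2
          have hls : (x :: xs).getLast (List.cons_ne_nil x xs) ∈ s.lastFin := by
            have hpos := hall _ (List.getLast_mem (List.cons_ne_nil x xs))
            rcases Finset.mem_union.mp h3' with h' | h'
            · exact absurd hpos (hd _ (last_subset_pos r h'))
            · exact h'
          exact (Language.mem_add _ _ _).mpr
            (Or.inr ((ihs hs x xs).mpr (condL_cons.mpr ⟨hxf, hc, hls⟩)))
  | pos r ih =>
      intro h x xs
      have ihr := ih (fun b => h b)
      constructor
      · intro hm
        rcases Language.mem_mul.mp hm with ⟨u, hu, v, hv, huv⟩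
        rcases Language.mem_kstar_iff_exists_nonempty.mp hv with ⟨S, rfl, hS⟩
        by_cases hue : u = []
        · subst hue
          rw [List.nil_append] at huv
          cases S with
          | nil => exact absurd huv.symm (List.cons_ne_nil x xs)
          | cons p S' =>
              have hp := hS p (List.mem_cons_self (a := p) (l := S'))
              have hres := pos_forward_aux r ihr S' p hp.2 hp.1
                (fun q hq => ⟨(hS q (List.mem_cons_of_mem _ hq)).1,
                  (hS q (List.mem_cons_of_mem _ hq)).2⟩)
              rw [show p ++ S'.flatten = x :: xs from by simpa using huv] at hres
              exact hres
        · have hres := pos_forward_aux r ihr S u hue hu (fun q hq => hS q hq)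
          rw [huv] at hres
          exact hres
      · intro hcond
        exact pos_backward_aux r ihr xs.length x xs le_rfl hcond
  | cat r s ihr ihs =>
      intro h x xs
      have hsum : ∀ b, r.rep b + s.rep b ≤ 1 := fun b => h b
      have hrh : ∀ b, r.rep b ≤ 1 := fun b => le_trans (Nat.le_add_right _ _) (hsum b)
      have hsh : ∀ b, s.rep b ≤ 1 := fun b => le_trans (Nat.le_add_left _ _) (hsum b)
      have hd : ∀ a, a ∈ r.posFin → a ∉ s.posFin := by
        intro a ha hb
        have h1 := one_le_rep_of_mem_pos ha
        have h2 := one_le_rep_of_mem_pos hb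
        have := hsum a
        omega
      have HtS : ∀ p q, p ∈ s.posFin → q ∈ s.followFin p →
          q ∈ (r.cat s).followFin p ∧ q ∈ s.posFin := by
        intro p q hp hq
        refine ⟨?_, follow_subset_pos s p hq⟩
        show q ∈ (if p ∈ r.posFin then
            (if p ∈ r.lastFin then r.followFin p ∪ s.firstFin else r.followFin p)
          else s.followFin p)
        rw [if_neg (fun hpr => hd p hpr hp)]; exact hq
      have HtS' : ∀ p q, p ∈ s.posFin → q ∈ (r.cat s).followFin p →
          q ∈ s.followFin p ∧ q ∈ s.posFin := by
        intro p q hp hq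
        have hq' : q ∈ (if p ∈ r.posFin then
            (if p ∈ r.lastFin then r.followFin p ∪ s.firstFin else r.followFin p)
          else s.followFin p) := hq
        rw [if_neg (fun hpr => hd p hpr hp)] at hq'
        exact ⟨hq', follow_subset_pos s p hq'⟩
      have HtR : ∀ p q, p ∈ r.posFin → q ∈ r.followFin p →
          q ∈ (r.cat s).followFin p ∧ q ∈ r.posFin := by
        intro p q hp hq
        refine ⟨?_, follow_subset_pos r p hq⟩
        show q ∈ (if p ∈ r.posFin then
            (if p ∈ r.lastFin then r.followFin p ∪ s.firstFin else r.followFin p)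
          else s.followFin p)
        rw [if_pos hp]
        split_ifs
        · exact Finset.mem_union_left _ hq
        · exact hq
      constructor
      · intro hm
        rcases Language.mem_mul.mp hm with ⟨u, hu, v, hv, huv⟩
        cases u with
        | nil =>
            rw [List.nil_append] at huv
            subst huv
            have hn : r.nullable = true := (nil_mem_iff r).mp hu
            obtain ⟨h1, h2, h3⟩ := condL_cons.mp ((ihs hsh x xs).mp hv)
            rw [condL_cons]
            refine ⟨?_, ?_, ?_⟩
            · show x ∈ (if r.nullable = true then r.firstFin ∪ s.firstFin else r.firstFin)
              rw [if_pos hn]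
              exact Finset.mem_union_right _ h1
            · exact (chain_transport HtS xs x (first_subset_pos s h1) h2).1
            · show (x :: xs).getLast (List.cons_ne_nil x xs) ∈
                (if s.nullable = true then r.lastFin ∪ s.lastFin else s.lastFin)
              split_ifs
              · exact Finset.mem_union_right _ h3
              · exact h3
        | cons a us =>
            cases v with
            | nil =>
                rw [List.append_nil] at huv
                have hx9 : x = a := (List.cons_eq_cons.mp huv).1.symm
                subst hx9
                have hxs9 : xs = us := (List.cons_eq_cons.mp huv).2.symm
                subst hxs9
                have hn : s.nullable = true := (nil_mem_iff s).mp hv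
                obtain ⟨h1, h2, h3⟩ := condL_cons.mp ((ihr hrh x xs).mp hu)
                rw [condL_cons]
                refine ⟨?_, ?_, ?_⟩
                · show x ∈ (if r.nullable = true then r.firstFin ∪ s.firstFin else r.firstFin)
                  split_ifs
                  · exact Finset.mem_union_left _ h1
                  · exact h1
                · exact (chain_transport HtR xs x (first_subset_pos r h1) h2).1
                · show (x :: xs).getLast (List.cons_ne_nil x xs) ∈
                    (if s.nullable = true then r.lastFin ∪ s.lastFin else s.lastFin)
                  rw [if_pos hn]
                  exact Finset.mem_union_left _ h3
            | cons b vs =>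
                rw [List.cons_append] at huv
                have hx9 : x = a := (List.cons_eq_cons.mp huv).1.symm
                subst hx9
                have hxs9 : xs = us ++ b :: vs := (List.cons_eq_cons.mp huv).2.symm
                subst hxs9
                obtain ⟨h1, h2, h3⟩ := condL_cons.mp ((ihr hrh x us).mp hu)
                obtain ⟨h4, h5, h6⟩ := condL_cons.mp ((ihs hsh b vs).mp hv)
                rw [condL_cons]
                refine ⟨?_, ?_, ?_⟩
                · show x ∈ (if r.nullable = true then r.firstFin ∪ s.firstFin else r.firstFin)
                  split_ifs
                  · exact Finset.mem_union_left _ h1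
                  · exact h1
                · show List.Chain' _ ((x :: us) ++ (b :: vs))
                  simp only [List.Chain', List.isChain_append]
                  refine ⟨(chain_transport HtR us x (first_subset_pos r h1) h2).1,
                    (chain_transport HtS vs b (first_subset_pos s h4) h5).1, ?_⟩
                  intro p hp q hq
                  rw [List.getLast?_eq_getLast (List.cons_ne_nil x us),
                    Option.mem_some_iff] at hp
                  rw [List.head?_cons, Option.mem_some_iff] at hq
                  have hpl : p ∈ r.lastFin := hp ▸ h3
                  have hq4 : q ∈ s.firstFin := hq ▸ h4
                  show q ∈ (if p ∈ r.posFin then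
                      (if p ∈ r.lastFin then r.followFin p ∪ s.firstFin else r.followFin p)
                    else s.followFin p)
                  rw [if_pos (last_subset_pos r hpl), if_pos hpl]
                  exact Finset.mem_union_right _ hq4
                · have hgl : (x :: (us ++ b :: vs)).getLast (List.cons_ne_nil _ _) =
                      (b :: vs).getLast (List.cons_ne_nil b vs) :=
                    getLast_append_cons (x :: us) b vs
                  rw [hgl]
                  show (b :: vs).getLast (List.cons_ne_nil b vs) ∈
                    (if s.nullable = true then r.lastFin ∪ s.lastFin else s.lastFin)
                  split_ifs
                  · exact Finset.mem_union_right _ h6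
                  · exact h6
      · intro hcond
        obtain ⟨h1, h2, h3⟩ := condL_cons.mp hcond
        have h1' : x ∈ (if r.nullable = true then r.firstFin ∪ s.firstFin else r.firstFin) := h1
        have h3' : (x :: xs).getLast (List.cons_ne_nil x xs) ∈
            (if s.nullable = true then r.lastFin ∪ s.lastFin else s.lastFin) := h3
        have hcase : x ∈ r.firstFin ∨ (r.nullable = true ∧ x ∈ s.firstFin) := by
          split_ifs at h1' with hn
          · rcases Finset.mem_union.mp h1' with h' | h'
            · exact Or.inl h'
            · exact Or.inr ⟨hn, h'⟩
          · exact Or.inl h1'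
        rcases hcase with hxf | ⟨hn, hxf⟩
        · -- word starts in r
          have hx : x ∈ r.posFin := first_subset_pos r hxf
          have H : ∀ p q, p ∈ r.posFin → (fun p q => q ∈ (r.cat s).followFin p) p q →
              ((fun p q => q ∈ r.followFin p) p q ∧ q ∈ r.posFin) ∨
              ((fun p q => p ∈ r.lastFin ∧ q ∈ s.firstFin) p q) := by
            intro p q hp hq
            have hq' : q ∈ (if p ∈ r.posFin then
                (if p ∈ r.lastFin then r.followFin p ∪ s.firstFin else r.followFin p)
              else s.followFin p) := hq
            rw [if_pos hp] at hq'
            by_cases hpl : p ∈ r.lastFin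
            · rw [if_pos hpl] at hq'
              rcases Finset.mem_union.mp hq' with h' | h'
              · exact Or.inl ⟨h', follow_subset_pos r p h'⟩
              · exact Or.inr ⟨hpl, h'⟩
            · rw [if_neg hpl] at hq'
              exact Or.inl ⟨hq', follow_subset_pos r p hq'⟩
          rcases chain_split H xs x hx h2 with ⟨hcS, hall⟩ | ⟨l₁, q, l₂, heq, hcS, hall, hbd, hR2⟩
          · -- whole word stays in r
            have hpos := hall _ (List.getLast_mem (List.cons_ne_nil x xs))
            have hsn : s.nullable = true := by
              by_contra hsn
              rw [if_neg hsn] at h3'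
              exact hd _ hpos (last_subset_pos s h3')
            rw [if_pos hsn] at h3'
            have hlr : (x :: xs).getLast (List.cons_ne_nil x xs) ∈ r.lastFin := by
              rcases Finset.mem_union.mp h3' with h' | h'
              · exact h'
              · exact absurd (last_subset_pos s h') (hd _ hpos)
            have hw : x :: xs ∈ r.lang := (ihr hrh x xs).mpr (condL_cons.mpr ⟨hxf, hcS, hlr⟩)
            exact Language.mem_mul.mpr ⟨x :: xs, hw, [], (nil_mem_iff s).mpr hsn, by simp⟩
          · subst heq
            have hpre : x :: l₁ ∈ r.lang :=
              (ihr hrh x l₁).mpr (condL_cons.mpr ⟨hxf, hcS, hbd.1⟩)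
            have hq : q ∈ s.posFin := first_subset_pos s hbd.2
            obtain ⟨hc2, hall2⟩ := chain_transport HtS' l₂ q hq hR2
            have hgl : (x :: (l₁ ++ q :: l₂)).getLast (List.cons_ne_nil _ _) =
                (q :: l₂).getLast (List.cons_ne_nil q l₂) :=
              getLast_append_cons (x :: l₁) q l₂
            rw [hgl] at h3'
            have hpos2 := hall2 _ (List.getLast_mem (List.cons_ne_nil q l₂))
            have hls : (q :: l₂).getLast (List.cons_ne_nil q l₂) ∈ s.lastFin := by
              split_ifs at h3' with hsn
              · rcases Finset.mem_union.mp h3' with h' | h'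
                · exact absurd hpos2 (hd _ (last_subset_pos r h'))
                · exact h'
              · exact h3'
            have hsuf : q :: l₂ ∈ s.lang :=
              (ihs hsh q l₂).mpr (condL_cons.mpr ⟨hbd.2, hc2, hls⟩)
            exact Language.mem_mul.mpr ⟨x :: l₁, hpre, q :: l₂, hsuf, rfl⟩
        · -- r is nullable and word is in s
          have hx : x ∈ s.posFin := first_subset_pos s hxf
          obtain ⟨hc, hall⟩ := chain_transport HtS' xs x hx h2
          have hpos := hall _ (List.getLast_mem (List.cons_ne_nil x xs))
          have hls : (x :: xs).getLast (List.cons_ne_nil x xs) ∈ s.lastFin := by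
            split_ifs at h3' with hsn
            · rcases Finset.mem_union.mp h3' with h' | h'
              · exact absurd hpos (hd _ (last_subset_pos r h'))
              · exact h'
            · exact h3'
          have hw : x :: xs ∈ s.lang := (ihs hsh x xs).mpr (condL_cons.mpr ⟨hxf, hc, hls⟩)
          exact Language.mem_mul.mpr ⟨[], (nil_mem_iff r).mpr hn, x :: xs, hw, rfl⟩

end PRE
theorem stmt14 {β : Type} [DecidableEq β] (r : PRE β) (hsore : ∀ b : β, r.rep b ≤ 1) :
    (∀ (x : β) (xs : List β),
      x :: xs ∈ r.lang ↔
        x ∈ r.firstFin ∧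
        List.Chain' (fun p q => q ∈ r.followFin p) (x :: xs) ∧
        (x :: xs).getLast (List.cons_ne_nil x xs) ∈ r.lastFin) ∧
    (([] : List β) ∈ r.lang ↔ r.nullable = true) := by
  refine ⟨fun x xs => ?_, PRE.nil_mem_iff r⟩
  rw [PRE.main r hsore x xs, PRE.condL_cons]
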